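/- Weak saturation of complete d-partite d-uniform hypergraphs (Moshkovitz–Shapira, special case s = 1): for integers n_i ≥ r_i ≥ 1 (i ∈ [d]), wsat(K^d_{n_1,…,n_d}, K^d_{r_1,…,r_d}) = ∏_{i∈[d]} n_i − |{T ∈ ∏_i [n_i] : ∃σ ∈ S_d ∀i, T_i ∈ [n_i]∖[r_{σ(i)} − 1]}|. -/

import Mathlib

open Finset

/-- A hypergraph is given by its (finite) set of edges, each a finite set of vertices.
`F` (a spanning subhypergraph of `G`, i.e. `F ⊆ G`) is weakly `H`-saturated in `G` if
the missing edges of `F` can be ordered so that each added edge lies in a copy of `H`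
present after its addition.  A copy of `H` is given by an injection `φ` of the vertices
of `H`; its edges are the `φ`-images of the edges of `H`. -/
def WeaklySat {α β : Type*} [DecidableEq α] (G : Finset (Finset α))
    (H : Finset (Finset β)) (F : Finset (Finset α)) : Prop :=
  F ⊆ G ∧ ∃ l : List (Finset α), l.Nodup ∧ l.toFinset = G \ F ∧
    ∀ j : Fin l.length, ∃ φ : β → α, Function.Injective φ ∧
      (∀ e ∈ H, e.image φ ∈ F ∪ (l.take (j.1 + 1)).toFinset) ∧
      l.get j ∈ H.image (fun e => e.image φ)

namespace WsatMS

open Polynomial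


variable {d : ℕ}

/-- The transversal edge associated to a cell `T` of the grid. -/
def edgeOf (m : Fin d → ℕ) (T : ∀ i, Fin (m i)) : Finset ((i : Fin d) × Fin (m i)) :=
  Finset.univ.image fun i => ⟨i, T i⟩

lemma mem_edgeOf {m : Fin d → ℕ} {T : ∀ i, Fin (m i)} {x : (i : Fin d) × Fin (m i)} :
    x ∈ edgeOf m T ↔ x.2 = T x.1 := by
  constructor
  · intro hx
    simp only [edgeOf, mem_image, mem_univ, true_and] at hx
    obtain ⟨i, hi⟩ := hx
    cases hi; rfl
  · intro hx
    simp only [edgeOf, mem_image, mem_univ, true_and]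
    exact ⟨x.1, by cases x; simp_all⟩

lemma edgeOf_filter (m : Fin d → ℕ) (T : ∀ i, Fin (m i)) (i : Fin d) :
    (edgeOf m T).filter (fun v => v.1 = i) = {⟨i, T i⟩} := by
  ext x
  simp only [mem_filter, mem_edgeOf, mem_singleton]
  constructor
  · rintro ⟨h1, h2⟩; cases x; subst h2; simp_all
  · rintro rfl; exact ⟨rfl, rfl⟩

lemma edgeOf_mem_host (m : Fin d → ℕ) (T : ∀ i, Fin (m i)) :
    edgeOf m T ∈ Finset.univ.filter fun W : Finset ((i : Fin d) × Fin (m i)) =>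
      ∀ i : Fin d, (W.filter fun v => v.1 = i).card = 1 := by
  simp only [mem_filter, mem_univ, true_and]
  intro i; rw [edgeOf_filter]; simp

lemma edgeOf_injective (m : Fin d → ℕ) : Function.Injective (edgeOf m) := by
  intro T T' h
  funext i
  have h1 : (⟨i, T i⟩ : (i : Fin d) × Fin (m i)) ∈ edgeOf m T' := by
    rw [← h]; exact mem_edgeOf.2 rfl
  exact mem_edgeOf.1 h1

lemma exists_cell {m : Fin d → ℕ} {W : Finset ((i : Fin d) × Fin (m i))}
    (h : ∀ i, (W.filter fun v => v.1 = i).card = 1) : ∃ T, W = edgeOf m T := by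
  have h' : ∀ i : Fin d, ∃ a, W.filter (fun v => v.1 = i) = {a} := by
    intro i; exact Finset.card_eq_one.1 (h i)
  choose a ha using h'
  have hfst : ∀ i, (a i).1 = i := by
    intro i
    have : a i ∈ W.filter (fun v => v.1 = i) := by rw [ha i]; simp
    exact (mem_filter.1 this).2
  have h2 : ∀ i, ∃ v : Fin (m i), a i = ⟨i, v⟩ := by
    intro i
    rcases hai : a i with ⟨j, u⟩
    have hj : j = i := by have := hfst i; rw [hai] at this; exact this
    subst hj
    exact ⟨u, rfl⟩
  choose T hT using h2
  refine ⟨T, ?_⟩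
  ext x
  rw [mem_edgeOf]
  constructor
  · intro hx
    have hx2 : x ∈ W.filter (fun v => v.1 = x.1) := mem_filter.2 ⟨hx, rfl⟩
    rw [ha x.1, mem_singleton, hT x.1] at hx2
    cases x with
    | mk i v => simpa using hx2
  · intro hx
    have haW : a x.1 ∈ W := by
      have : a x.1 ∈ W.filter (fun v => v.1 = x.1) := by rw [ha x.1]; simp
      exact (mem_filter.1 this).1
    rw [hT x.1] at haW
    cases x with
    | mk i v =>
      simp only at hx
      subst hx
      exact haW



lemma leadingCoeff_basisDivisor (x y : ℝ) :
    (Lagrange.basisDivisor x y).leadingCoeff = (x - y)⁻¹ := by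
  rw [Lagrange.basisDivisor, leadingCoeff_mul, leadingCoeff_C, leadingCoeff_X_sub_C, mul_one]

lemma coeff_basis {ι : Type*} [DecidableEq ι] (s : Finset ι) (v : ι → ℝ)
    (hinj : Set.InjOn v s) {t : ι} (ht : t ∈ s) :
    (Lagrange.basis s v t).coeff (s.card - 1) = Lagrange.nodalWeight s v t := by
  have h1 : (Lagrange.basis s v t).natDegree = s.card - 1 :=
    Lagrange.natDegree_basis hinj ht
  rw [← h1, coeff_natDegree, Lagrange.basis]
  rw [leadingCoeff_prod]
  rw [Lagrange.nodalWeight]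
  exact Finset.prod_congr rfl fun j _ => leadingCoeff_basisDivisor _ _

lemma lagrange_dep {ι : Type*} [DecidableEq ι] (s : Finset ι) (v : ι → ℝ)
    (hinj : Set.InjOn v s) {u : ℕ} (hu : u + 2 ≤ s.card) :
    ∑ t ∈ s, Lagrange.nodalWeight s v t * (v t) ^ u = 0 := by
  have hdeg : (X ^ u : ℝ[X]).degree < s.card := by
    rw [degree_X_pow]
    exact_mod_cast Nat.lt_of_lt_of_le (by omega) le_rfl
  have h := Lagrange.eq_interpolate (f := (X ^ u : ℝ[X])) hinj hdeg
  have hc := congrArg (fun p => Polynomial.coeff p (s.card - 1)) h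
  simp only [Lagrange.interpolate_apply, Polynomial.finset_sum_coeff, coeff_C_mul,
    eval_pow, eval_X, coeff_X_pow] at hc
  rw [if_neg (by omega)] at hc
  calc ∑ t ∈ s, Lagrange.nodalWeight s v t * (v t) ^ u
      = ∑ x ∈ s, v x ^ u * (Lagrange.basis s v x).coeff (s.card - 1) :=
        Finset.sum_congr rfl fun t ht => by rw [coeff_basis s v hinj ht, mul_comm]
    _ = 0 := hc.symm



/-- The 1-D Vandermonde matrix with nodes 1,…,k: entry `(u,t) = (t+1)^u`. -/
noncomputable def vmat (k : ℕ) : Matrix (Fin k) (Fin k) ℝ :=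
  (Matrix.vandermonde fun t : Fin k => ((t : ℕ) + 1 : ℝ)).transpose

lemma vmat_apply (k : ℕ) (u t : Fin k) : vmat k u t = ((t : ℕ) + 1 : ℝ) ^ (u : ℕ) := rfl

lemma vmat_det_ne_zero (k : ℕ) : (vmat k).det ≠ 0 := by
  rw [vmat, Matrix.det_transpose, Matrix.det_vandermonde]
  refine Finset.prod_ne_zero_iff.2 fun i _ => Finset.prod_ne_zero_iff.2 fun j hj => ?_
  have hij : i < j := Finset.mem_Ioi.1 hj
  have : ((i : ℕ) + 1 : ℝ) < ((j : ℕ) + 1 : ℝ) := by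
    have : (i : ℕ) < (j : ℕ) := hij
    exact_mod_cast by omega
  intro h
  exact absurd (sub_eq_zero.1 h) (by linarith)

lemma vmat_mul_inv (k : ℕ) : vmat k * (vmat k)⁻¹ = 1 :=
  Matrix.mul_nonsing_inv _ (isUnit_iff_ne_zero.2 (vmat_det_ne_zero k))

variable {d : ℕ}

/-- The big Kronecker-product Vandermonde matrix on the grid. -/
noncomputable def bmat (m : Fin d → ℕ) : Matrix (∀ i, Fin (m i)) (∀ i, Fin (m i)) ℝ :=
  fun U T => ∏ i, ((T i : ℕ) + 1 : ℝ) ^ (U i : ℕ)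

/-- Candidate inverse: Kronecker product of the one-dimensional inverses. -/
noncomputable def bmat' (m : Fin d → ℕ) : Matrix (∀ i, Fin (m i)) (∀ i, Fin (m i)) ℝ :=
  fun T U => ∏ i, (vmat (m i))⁻¹ (T i) (U i)

lemma bmat_mul_bmat' (m : Fin d → ℕ) : bmat m * bmat' m = 1 := by
  ext U U'
  rw [Matrix.mul_apply]
  have : ∀ T : ∀ i, Fin (m i),
      bmat m U T * bmat' m T U' = ∏ i, (vmat (m i) (U i) (T i) * (vmat (m i))⁻¹ (T i) (U' i)) := by
    intro T
    rw [bmat, bmat', ← Finset.prod_mul_distrib]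
    exact Finset.prod_congr rfl fun i _ => by rw [vmat_apply]
  simp_rw [this]
  have key := Finset.prod_univ_sum (fun i : Fin d => (Finset.univ : Finset (Fin (m i))))
    (fun i t => vmat (m i) (U i) t * (vmat (m i))⁻¹ t (U' i))
  rw [Fintype.piFinset_univ] at key
  rw [← key]
  have : ∀ i : Fin d, ∑ t, vmat (m i) (U i) t * (vmat (m i))⁻¹ t (U' i)
      = (1 : Matrix (Fin (m i)) (Fin (m i)) ℝ) (U i) (U' i) := by
    intro i
    rw [← Matrix.mul_apply, vmat_mul_inv]
  rw [Finset.prod_congr rfl fun i _ => this i]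
  by_cases h : U = U'
  · subst h; simp [Matrix.one_apply]
  · obtain ⟨i, hi⟩ : ∃ i, U i ≠ U' i := by
      by_contra hc
      push_neg at hc
      exact h (funext hc)
    rw [Matrix.one_apply_ne h]
    exact Finset.prod_eq_zero (Finset.mem_univ i) (by simp [Matrix.one_apply_ne hi])



variable {d : ℕ}

lemma sigma_eq_of_val {m : Fin d → ℕ} {x y : (i : Fin d) × Fin (m i)}
    (h1 : x.1 = y.1) (h2 : (x.2 : ℕ) = (y.2 : ℕ)) : x = y := by
  rcases x with ⟨i, u⟩
  rcases y with ⟨i', u'⟩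
  simp only at h1
  subst h1
  simp only at h2
  exact congrArg _ (Fin.ext h2)

section Structure

variable {n r : Fin d → ℕ}

/-- Structure of an injective map all of whose transversal images are transversals. -/
lemma phi_structure (hr : ∀ i, 1 ≤ r i)
    (φ : ((j : Fin d) × Fin (r j)) → ((i : Fin d) × Fin (n i)))
    (hinj : Function.Injective φ)
    (S : (∀ j, Fin (r j)) → (∀ i, Fin (n i)))
    (hS : ∀ w, (edgeOf r w).image φ = edgeOf n (S w)) :
    ∃ pe : Equiv.Perm (Fin d), ∀ j (v : Fin (r j)), (φ ⟨j, v⟩).1 = pe j := by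
  classical
  -- the part map for a given transversal
  set q : (∀ j, Fin (r j)) → Fin d → Fin d := fun w j => (φ ⟨j, w j⟩).1 with hq
  have hqinj : ∀ w, Function.Injective (q w) := by
    intro w j j' hjj
    have h1 : φ ⟨j, w j⟩ ∈ edgeOf n (S w) := by
      rw [← hS w]
      exact Finset.mem_image_of_mem φ (mem_edgeOf.2 rfl)
    have h2 : φ ⟨j', w j'⟩ ∈ edgeOf n (S w) := by
      rw [← hS w]
      exact Finset.mem_image_of_mem φ (mem_edgeOf.2 rfl)
    have e1 : φ ⟨j, w j⟩ = ⟨(q w j), S w (q w j)⟩ :=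
      sigma_eq_of_val rfl (by rw [congrArg (fun i => ((S w i : ℕ))) (rfl : q w j = q w j)]; exact congrArg _ (mem_edgeOf.1 h1))
    have e2 : φ ⟨j', w j'⟩ = ⟨(q w j'), S w (q w j')⟩ :=
      sigma_eq_of_val rfl (congrArg _ (mem_edgeOf.1 h2))
    have : φ ⟨j, w j⟩ = φ ⟨j', w j'⟩ := by
      rw [e1, e2, hjj]
    have := hinj this
    exact congrArg Sigma.fst this
  have hqbij : ∀ w, Function.Bijective (q w) := fun w =>
    (Finite.injective_iff_bijective).1 (hqinj w)
  -- single-coordinate update does not change the part map at the updated coordinate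
  have hupd : ∀ (w : ∀ j, Fin (r j)) (j : Fin d) (v : Fin (r j)),
      q (Function.update w j v) j = q w j := by
    intro w j v
    set w' := Function.update w j v with hw'
    have hoff : ∀ k, k ≠ j → q w' k = q w k := by
      intro k hk
      simp only [hq, hw', Function.update_of_ne hk]
    obtain ⟨k, hk⟩ := (hqbij w').2 (q w j)
    by_cases hkj : k = j
    · exact hkj ▸ hk
    · exfalso
      have : q w k = q w j := by rw [← hoff k hkj, hk]
      exact hkj ((hqinj w) this)
  -- base transversal
  set w₀ : ∀ j, Fin (r j) := fun j => ⟨0, hr j⟩ with hw₀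
  refine ⟨Equiv.ofBijective (q w₀) (hqbij w₀), ?_⟩
  intro j v
  have h1 : q (Function.update w₀ j v) j = q w₀ j := hupd w₀ j v
  have h2 : q (Function.update w₀ j v) j = (φ ⟨j, v⟩).1 := by
    simp only [hq, Function.update_self]
  rw [← h2, h1]
  rfl

end Structure


section Main

variable (n r : Fin d → ℕ)

def IsGood (U : ∀ i, Fin (n i)) : Prop :=
  ∃ σ : Equiv.Perm (Fin d), ∀ i, r (σ i) ≤ (U i : ℕ) + 1

instance : DecidablePred (IsGood n r) := fun _ => Fintype.decidableExistsFintype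

/-- cells that are in the minimal weakly saturated configuration -/
noncomputable def badF : Finset (∀ i, Fin (n i)) :=
  Finset.univ.filter fun U => ¬ IsGood n r U

noncomputable def goodF : Finset (∀ i, Fin (n i)) :=
  Finset.univ.filter fun U => IsGood n r U

/-- witness vector of a cell -/
noncomputable def wCell (T : ∀ i, Fin (n i)) : {U : ∀ i, Fin (n i) // ¬ IsGood n r U} → ℝ :=
  fun U => bmat n U.1 T

lemma single_mem_span (U₀ : {U : ∀ i, Fin (n i) // ¬ IsGood n r U}) :
    Pi.single U₀ (1 : ℝ) ∈ Submodule.span ℝ (Set.range (wCell n r)) := by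
  have key : Pi.single U₀ (1 : ℝ) = ∑ T : ∀ i, Fin (n i), bmat' n T U₀.1 • wCell n r T := by
    funext U
    have : (∑ T : ∀ i, Fin (n i), bmat' n T U₀.1 • wCell n r T) U
        = ∑ T : ∀ i, Fin (n i), bmat n U.1 T * bmat' n T U₀.1 := by
      rw [Finset.sum_apply]
      exact Finset.sum_congr rfl fun T _ => by
        simp [wCell, mul_comm]
    rw [this, ← Matrix.mul_apply, bmat_mul_bmat' n]
    by_cases h : U = U₀
    · subst h; simp [Matrix.one_apply]
    · rw [Matrix.one_apply_ne (fun hc => h (Subtype.ext hc)), Pi.single_apply, if_neg h]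
  rw [key]
  exact Submodule.sum_mem _ fun T _ =>
    Submodule.smul_mem _ _ (Submodule.subset_span (Set.mem_range_self T))

lemma span_wCell_top : Submodule.span ℝ (Set.range (wCell n r)) = ⊤ := by
  rw [Submodule.eq_top_iff']
  intro f
  have : f = ∑ U : {U : ∀ i, Fin (n i) // ¬ IsGood n r U}, f U • (Pi.single U (1 : ℝ) : {U : ∀ i, Fin (n i) // ¬ IsGood n r U} → ℝ) := by
    funext V
    rw [Finset.sum_apply]
    rw [Finset.sum_eq_single V]
    · simp
    · intro U _ hU
      simp [Pi.single_apply, Ne.symm hU]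
    · intro h; exact absurd (Finset.mem_univ V) h
  rw [this]
  exact Submodule.sum_mem _ fun U _ =>
    Submodule.smul_mem _ _ (single_mem_span n r U)

lemma box_relation (hr : ∀ i, 1 ≤ r i)
    (φ : ((j : Fin d) × Fin (r j)) → ((i : Fin d) × Fin (n i)))
    (hinj : Function.Injective φ)
    (S : (∀ j, Fin (r j)) → (∀ i, Fin (n i)))
    (hS : ∀ w, (edgeOf r w).image φ = edgeOf n (S w)) :
    Function.Injective S ∧
    ∃ γ : (∀ j, Fin (r j)) → ℝ, (∀ w, γ w ≠ 0) ∧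
      ∑ w : ∀ j, Fin (r j), γ w • wCell n r (S w) = 0 := by
  classical
  obtain ⟨pe, hpe⟩ := phi_structure hr φ hinj S hS
  set val : ∀ j, Fin (r j) → ℕ := fun j v => ((φ ⟨j, v⟩).2 : ℕ) with hvaldef
  have hval : ∀ w j, ((S w (pe j) : ℕ)) = val j (w j) := by
    intro w j
    have hmem : φ ⟨j, w j⟩ ∈ edgeOf n (S w) := by
      rw [← hS w]; exact Finset.mem_image_of_mem φ (mem_edgeOf.2 rfl)
    have h1 : ((φ ⟨j, w j⟩).2 : ℕ) = ((S w (φ ⟨j, w j⟩).1 : ℕ)) :=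
      congrArg Fin.val (mem_edgeOf.1 hmem)
    have h2 : ((S w (φ ⟨j, w j⟩).1 : ℕ)) = ((S w (pe j) : ℕ)) :=
      congrArg (fun i => ((S w i : ℕ))) (hpe j (w j))
    exact (h2.symm.trans h1.symm)
  have hvalinj : ∀ j, Function.Injective (val j) := by
    intro j v v' hvv
    have hsig : φ ⟨j, v⟩ = φ ⟨j, v'⟩ :=
      sigma_eq_of_val ((hpe j v).trans (hpe j v').symm) hvv
    have := hinj hsig
    exact eq_of_heq (Sigma.mk.inj_iff.mp this).2
  have hSinj : Function.Injective S := by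
    intro w w' hww
    funext j
    apply hvalinj j
    rw [← hval w j, ← hval w' j, hww]
  set A : ∀ j : Fin d, Finset ℕ := fun j => Finset.univ.image (val j) with hA
  have hcardA : ∀ j, (A j).card = r j := by
    intro j
    rw [hA]
    simp [Finset.card_image_of_injective _ (hvalinj j)]
  have hnodeinj : ∀ j, Set.InjOn (fun t : ℕ => (t : ℝ) + 1) (A j) := by
    intro j t _ t' _ h
    have h' : (t : ℝ) + 1 = (t' : ℝ) + 1 := h
    have : (t : ℝ) = (t' : ℝ) := by linarith
    exact_mod_cast this
  set c : ∀ _ : Fin d, ℕ → ℝ := fun j => Lagrange.nodalWeight (A j) (fun t : ℕ => (t : ℝ) + 1)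
    with hc
  have hcne : ∀ j, ∀ t ∈ A j, c j t ≠ 0 := fun j t ht =>
    Lagrange.nodalWeight_ne_zero (hnodeinj j) ht
  have hvanish : ∀ j, ∀ u : ℕ, u + 2 ≤ r j →
      ∑ t ∈ A j, c j t * ((t : ℝ) + 1) ^ u = 0 := by
    intro j u hu
    have := lagrange_dep (A j) (fun t : ℕ => (t : ℝ) + 1) (hnodeinj j)
      (u := u) (by rw [hcardA j]; exact hu)
    simpa using this
  refine ⟨hSinj, fun w => ∏ j, c j (val j (w j)), ?_, ?_⟩
  · intro w
    rw [Finset.prod_ne_zero_iff]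
    exact fun j _ => hcne j _ (Finset.mem_image_of_mem _ (Finset.mem_univ (w j)))
  · funext U
    rw [Finset.sum_apply]
    have step1 : ∀ w : ∀ j, Fin (r j),
        ((∏ j, c j (val j (w j))) • wCell n r (S w)) U
          = ∏ j, (c j (val j (w j)) * ((val j (w j) : ℝ) + 1) ^ ((U.1 (pe j) : ℕ))) := by
      intro w
      have hb : wCell n r (S w) U = ∏ j, ((val j (w j) : ℝ) + 1) ^ ((U.1 (pe j) : ℕ)) := by
        rw [wCell, bmat]
        rw [← Equiv.prod_comp pe (fun i => ((S w i : ℕ) + 1 : ℝ) ^ ((U.1 i : ℕ)))]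
        exact Finset.prod_congr rfl fun j _ => by rw [hval w j]
      rw [Pi.smul_apply, hb, smul_eq_mul, ← Finset.prod_mul_distrib]
    rw [Finset.sum_congr rfl fun w _ => step1 w]
    have step2 := Finset.prod_univ_sum (fun j : Fin d => (Finset.univ : Finset (Fin (r j))))
      (fun j v => c j (val j v) * ((val j v : ℝ) + 1) ^ ((U.1 (pe j) : ℕ)))
    rw [Fintype.piFinset_univ] at step2
    rw [← step2]
    -- now factor by coordinate and find a vanishing factor
    have hbad := U.2
    rw [IsGood] at hbad
    push_neg at hbad
    obtain ⟨i, hi⟩ := hbad pe.symm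
    have hj : (U.1 (pe (pe.symm i)) : ℕ) + 2 ≤ r (pe.symm i) := by
      rw [Equiv.apply_symm_apply]
      omega
    have : (∑ v : Fin (r (pe.symm i)), c (pe.symm i) (val (pe.symm i) v) *
        ((val (pe.symm i) v : ℝ) + 1) ^ ((U.1 (pe (pe.symm i)) : ℕ))) = 0 := by
      have himg := Finset.sum_image (s := (Finset.univ : Finset (Fin (r (pe.symm i)))))
        (g := val (pe.symm i))
        (f := fun t => c (pe.symm i) t * ((t : ℝ) + 1) ^ ((U.1 (pe (pe.symm i)) : ℕ)))
        (fun x _ y _ h => hvalinj (pe.symm i) h)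
      rw [← himg]
      exact hvanish (pe.symm i) _ hj
    rw [Pi.zero_apply]
    exact Finset.prod_eq_zero (Finset.mem_univ (pe.symm i)) this

theorem lower_bound (hr : ∀ i, 1 ≤ r i)
    (F : Finset (Finset ((i : Fin d) × Fin (n i))))
    (hF : WeaklySat
      (Finset.univ.filter fun W : Finset ((i : Fin d) × Fin (n i)) =>
        ∀ i : Fin d, (W.filter fun v => v.1 = i).card = 1)
      (Finset.univ.filter fun W : Finset ((i : Fin d) × Fin (r i)) =>
        ∀ i : Fin d, (W.filter fun v => v.1 = i).card = 1)
      F) :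
    (badF n r).card ≤ F.card := by
  classical
  obtain ⟨hFG, l, hnodup, htf, hstep⟩ := hF
  set G := (Finset.univ.filter fun W : Finset ((i : Fin d) × Fin (n i)) =>
        ∀ i : Fin d, (W.filter fun v => v.1 = i).card = 1) with hG
  set H := (Finset.univ.filter fun W : Finset ((i : Fin d) × Fin (r i)) =>
        ∀ i : Fin d, (W.filter fun v => v.1 = i).card = 1) with hH
  have hsub : ∀ k, (l.take k).toFinset ⊆ G := by
    intro k x hx
    have : x ∈ l.toFinset := List.mem_toFinset.2 (List.take_subset _ _ (List.mem_toFinset.1 hx))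
    rw [htf] at this
    exact (Finset.mem_sdiff.1 this).1
  have main : ∀ k, Submodule.span ℝ (wCell n r '' {T | edgeOf n T ∈ F ∪ (l.take k).toFinset})
      ≤ Submodule.span ℝ (wCell n r '' {T | edgeOf n T ∈ F}) := by
    intro k
    induction k with
    | zero => simp
    | succ k ih =>
      by_cases hk : k < l.length
      · have htake : (l.take (k + 1)).toFinset
            = insert (l.get ⟨k, hk⟩) (l.take k).toFinset := by
          rw [List.take_succ, List.toFinset_append]
          have : l[k]? = some (l.get ⟨k, hk⟩) := by
            rw [List.getElem?_eq_getElem hk]; rfl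
          rw [this]
          rw [Finset.union_comm, Finset.insert_eq]
          simp
        obtain ⟨φ, hφinj, himgs, hget⟩ := hstep ⟨k, hk⟩
        -- all images of pattern edges are host edges
        have hSex : ∀ w : ∀ j, Fin (r j), ∃ Sw, (edgeOf r w).image φ = edgeOf n Sw := by
          intro w
          have h1 : (edgeOf r w).image φ ∈ F ∪ (l.take (k + 1)).toFinset :=
            himgs _ (edgeOf_mem_host r w)
          have h2 : (edgeOf r w).image φ ∈ G := by
            rcases Finset.mem_union.1 h1 with h | h
            · exact hFG h
            · exact hsub _ h
          rw [hG, Finset.mem_filter] at h2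
          exact exists_cell h2.2
        choose S hS using hSex
        obtain ⟨hSinj, γ, hγ, hrel⟩ := box_relation n r hr φ hφinj S hS
        obtain ⟨e₀, he₀H, he₀⟩ := Finset.mem_image.1 hget
        obtain ⟨w₀, hw₀⟩ : ∃ w₀, e₀ = edgeOf r w₀ := by
          rw [hH, Finset.mem_filter] at he₀H
          exact exists_cell he₀H.2
        have hSw₀ : edgeOf n (S w₀) = l.get ⟨k, hk⟩ := by rw [← hS w₀, ← hw₀, he₀]
        -- the new vector is in the span of the old ones
        have hnew : wCell n r (S w₀) ∈
            Submodule.span ℝ (wCell n r '' {T | edgeOf n T ∈ F ∪ (l.take k).toFinset}) := by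
          have hold : ∀ w, w ≠ w₀ →
              edgeOf n (S w) ∈ F ∪ (l.take k).toFinset := by
            intro w hw
            have h1 : edgeOf n (S w) ∈ F ∪ (l.take (k + 1)).toFinset := by
              rw [← hS w]; exact himgs _ (edgeOf_mem_host r w)
            rw [htake] at h1
            rcases Finset.mem_union.1 h1 with h | h
            · exact Finset.mem_union.2 (Or.inl h)
            · rcases Finset.mem_insert.1 h with h | h
              · exfalso
                rw [← hSw₀] at h
                exact hw (hSinj (edgeOf_injective n h))
              · exact Finset.mem_union.2 (Or.inr h)
          have hsum := Finset.add_sum_erase Finset.univ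
            (fun w => γ w • wCell n r (S w)) (Finset.mem_univ w₀)
          rw [hrel] at hsum
          have hw₀expr : wCell n r (S w₀)
              = (γ w₀)⁻¹ • (- ∑ w ∈ Finset.univ.erase w₀, γ w • wCell n r (S w)) := by
            have : γ w₀ • wCell n r (S w₀)
                = - ∑ w ∈ Finset.univ.erase w₀, γ w • wCell n r (S w) := by
              rw [eq_neg_iff_add_eq_zero]
              exact hsum
            rw [← this, smul_smul, inv_mul_cancel₀ (hγ w₀), one_smul]
          rw [hw₀expr]
          refine Submodule.smul_mem _ _ (Submodule.neg_mem _ (Submodule.sum_mem _ ?_))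
          intro w hw
          refine Submodule.smul_mem _ _ (Submodule.subset_span ?_)
          exact ⟨S w, hold w (Finset.ne_of_mem_erase hw), rfl⟩
        refine le_trans ?_ ih
        rw [Submodule.span_le]
        rintro x ⟨T, hT, rfl⟩
        simp only [Set.mem_setOf_eq, htake] at hT
        rcases Finset.mem_union.1 hT with h | h
        · exact Submodule.subset_span ⟨T, Finset.mem_union.2 (Or.inl h), rfl⟩
        · rcases Finset.mem_insert.1 h with h | h
          · have : T = S w₀ := edgeOf_injective n (by rw [hSw₀]; exact h)
            rw [this]
            exact hnew
          · exact Submodule.subset_span ⟨T, Finset.mem_union.2 (Or.inr h), rfl⟩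
      · push_neg at hk
        have h1 : l.take (k+1) = l.take k := by
          rw [List.take_of_length_le hk, List.take_of_length_le (le_trans hk (Nat.le_succ k))]
        rw [h1]
        exact ih
  -- at the end of the process everything is spanned
  have hfull : Submodule.span ℝ (wCell n r '' {T | edgeOf n T ∈ F ∪ (l.take l.length).toFinset})
      = ⊤ := by
    rw [List.take_length, htf, Finset.union_sdiff_of_subset hFG]
    have : {T : ∀ i, Fin (n i) | edgeOf n T ∈ G} = Set.univ := by
      ext T
      simp only [Set.mem_setOf_eq, Set.mem_univ, iff_true]
      exact edgeOf_mem_host n T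
    rw [this, Set.image_univ, span_wCell_top]
  have hFtop : Submodule.span ℝ (wCell n r '' {T | edgeOf n T ∈ F}) = ⊤ :=
    top_le_iff.1 (hfull ▸ main l.length)
  -- dimension count
  set Fc : Finset (∀ i, Fin (n i)) := Finset.univ.filter (fun T => edgeOf n T ∈ F) with hFc
  have hcoe : (↑(Fc.image (wCell n r)) : Set _) = wCell n r '' {T | edgeOf n T ∈ F} := by
    rw [Finset.coe_image]
    congr 1
    ext T
    simp [hFc]
  have hdim : (badF n r).card ≤ (Fc.image (wCell n r)).card := by
    have h1 := finrank_span_finset_le_card (R := ℝ) (Fc.image (wCell n r))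
    rw [Set.finrank, hcoe, hFtop] at h1
    have h2 : Module.finrank ℝ (⊤ : Submodule ℝ ({U : ∀ i, Fin (n i) // ¬ IsGood n r U} → ℝ))
        = (badF n r).card := by
      rw [finrank_top, Module.finrank_pi, Fintype.card_subtype]
      rfl
    omega
  calc (badF n r).card ≤ (Fc.image (wCell n r)).card := hdim
    _ ≤ Fc.card := Finset.card_image_le
    _ = (Fc.image (edgeOf n)).card := (Finset.card_image_of_injective _ (edgeOf_injective n)).symm
    _ ≤ F.card := Finset.card_le_card (by
        intro x hx
        obtain ⟨T, hT, rfl⟩ := Finset.mem_image.1 hx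
        exact (Finset.mem_filter.1 hT).2)


lemma toFinset_map' {X Y : Type*} [DecidableEq X] [DecidableEq Y] (f : X → Y) (L : List X) :
    (L.map f).toFinset = L.toFinset.image f := by
  ext y
  simp [List.mem_toFinset, List.mem_map, Finset.mem_image]

lemma getElem_map' {X Y : Type*} (f : X → Y) (L : List X) (k : ℕ)
    (h : k < L.length) (h' : k < (L.map f).length) : (L.map f)[k] = f (L[k]) :=
  List.getElem_map f

lemma mem_take_toFinset {X : Type*} [DecidableEq X] (L : List X) (k m : ℕ)
    (hk : k < L.length) (hkm : k < m) : L[k] ∈ (L.take m).toFinset := by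
  rw [List.mem_toFinset]
  have hlt : k < (L.take m).length := by
    rw [List.length_take]; omega
  have h := List.getElem_take (xs := L) (j := m) (i := k) (h := hlt)
  rw [← h]
  exact List.getElem_mem hlt

noncomputable def wt (U : ∀ i, Fin (n i)) : ℕ := ∑ i, (U i : ℕ)

theorem upper_bound (hr : ∀ i, 1 ≤ r i) (hrn : ∀ i, r i ≤ n i) :
    WeaklySat
      (Finset.univ.filter fun W : Finset ((i : Fin d) × Fin (n i)) =>
        ∀ i : Fin d, (W.filter fun v => v.1 = i).card = 1)
      (Finset.univ.filter fun W : Finset ((i : Fin d) × Fin (r i)) =>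
        ∀ i : Fin d, (W.filter fun v => v.1 = i).card = 1)
      ((badF n r).image (edgeOf n)) := by
  classical
  set G := (Finset.univ.filter fun W : Finset ((i : Fin d) × Fin (n i)) =>
        ∀ i : Fin d, (W.filter fun v => v.1 = i).card = 1) with hG
  set H := (Finset.univ.filter fun W : Finset ((i : Fin d) × Fin (r i)) =>
        ∀ i : Fin d, (W.filter fun v => v.1 = i).card = 1) with hH
  set F := (badF n r).image (edgeOf n) with hF
  set cells : List (∀ i, Fin (n i)) :=
    ((goodF n r).toList).mergeSort (fun a b => decide (wt n a ≤ wt n b)) with hcells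
  have hperm := List.mergeSort_perm ((goodF n r).toList)
    (fun a b => decide (wt n a ≤ wt n b))
  have hcnodup : cells.Nodup := hperm.nodup_iff.2 (Finset.nodup_toList _)
  have hctf : cells.toFinset = goodF n r := by
    rw [List.toFinset_eq_of_perm _ _ hperm, Finset.toList_toFinset]
  have hsorted : List.Pairwise (fun a b => decide (wt n a ≤ wt n b) = true) cells :=
    List.pairwise_mergeSort (le := fun a b => decide (wt n a ≤ wt n b))
      (by intro a b c; simp only [decide_eq_true_eq]; omega)
      (by intro a b; simp only [Bool.or_eq_true, decide_eq_true_eq]; omega)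
      ((goodF n r).toList)
  have hmono : ∀ (a b : ℕ) (ha : a < cells.length) (hb : b < cells.length),
      a < b → wt n (cells[a]) ≤ wt n (cells[b]) := by
    intro a b ha hb hab
    have := hsorted.rel_get_of_lt (a := ⟨a, ha⟩) (b := ⟨b, hb⟩) (by exact hab)
    simpa using this
  set l : List (Finset ((i : Fin d) × Fin (n i))) := cells.map (edgeOf n) with hl
  have hlen : l.length = cells.length := List.length_map _
  refine ⟨?_, l, ?_, ?_, ?_⟩
  · -- F ⊆ G
    intro x hx
    obtain ⟨T, _, rfl⟩ := Finset.mem_image.1 hx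
    exact edgeOf_mem_host n T
  · exact hcnodup.map (edgeOf_injective n)
  · -- l.toFinset = G \ F
    rw [hl, toFinset_map', hctf]
    have hGim : G = Finset.univ.image (edgeOf n) := by
      ext W
      constructor
      · intro hW
        rw [hG, Finset.mem_filter] at hW
        obtain ⟨T, rfl⟩ := exists_cell hW.2
        exact Finset.mem_image_of_mem _ (Finset.mem_univ T)
      · intro hW
        obtain ⟨T, _, rfl⟩ := Finset.mem_image.1 hW
        exact edgeOf_mem_host n T
    rw [hGim, hF, ← Finset.image_sdiff _ _ (edgeOf_injective n)]
    congr 1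
    rw [badF, Finset.filter_not, Finset.sdiff_sdiff_self_left]
    rw [goodF]
    exact (Finset.inter_eq_right.2 (Finset.filter_subset _ _)).symm
  · -- the saturation process
    intro j
    have hjc : (j : ℕ) < cells.length := by rw [← hlen]; exact j.2
    set U₀ := cells[(j : ℕ)] with hU₀
    have hU₀good : IsGood n r U₀ := by
      have : U₀ ∈ cells.toFinset := List.mem_toFinset.2 (List.getElem_mem hjc)
      rw [hctf, goodF, Finset.mem_filter] at this
      exact this.2
    obtain ⟨σ, hσ⟩ := hU₀good
    -- bounds
    have hU₀lt : ∀ i, (U₀ i : ℕ) < n i := fun i => (U₀ i).isLt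
    have hrσ : ∀ i, r (σ i) ≤ (U₀ i : ℕ) + 1 := hσ
    -- the embedding
    have hψlt : ∀ (jj : Fin d) (v : Fin (r jj)), (v : ℕ) + 2 ≤ r jj →
        (v : ℕ) < n (σ.symm jj) := by
      intro jj v hv
      have h1 := hrσ (σ.symm jj)
      rw [Equiv.apply_symm_apply] at h1
      have := hU₀lt (σ.symm jj)
      omega
    set ψ : ∀ jj : Fin d, Fin (r jj) → Fin (n (σ.symm jj)) := fun jj v =>
      if h : (v : ℕ) + 2 ≤ r jj then ⟨(v : ℕ), hψlt jj v h⟩ else U₀ (σ.symm jj) with hψ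
    set φ : ((jj : Fin d) × Fin (r jj)) → ((i : Fin d) × Fin (n i)) := fun x =>
      ⟨σ.symm x.1, ψ x.1 x.2⟩ with hφ
    have hψval : ∀ (jj : Fin d) (v : Fin (r jj)),
        ((ψ jj v : ℕ)) = if (v : ℕ) + 2 ≤ r jj then (v : ℕ) else (U₀ (σ.symm jj) : ℕ) := by
      intro jj v
      rw [hψ]
      by_cases h : (v : ℕ) + 2 ≤ r jj
      · simp [h]
      · simp [h]
    have hUbig : ∀ jj : Fin d, r jj ≤ (U₀ (σ.symm jj) : ℕ) + 1 := by
      intro jj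
      have h1 := hrσ (σ.symm jj)
      rw [Equiv.apply_symm_apply] at h1
      exact h1
    have hψinj : ∀ jj : Fin d, Function.Injective (ψ jj) := by
      intro jj v v' hvv
      have hval := congrArg Fin.val hvv
      rw [hψval, hψval] at hval
      have h1 := hUbig jj
      have h2 := v.isLt
      have h3 := v'.isLt
      apply Fin.ext
      by_cases ha : (v : ℕ) + 2 ≤ r jj <;> by_cases hb : (v' : ℕ) + 2 ≤ r jj <;>
        simp [ha, hb] at hval <;> omega
    have hφinj : Function.Injective φ := by
      rintro ⟨a, v⟩ ⟨b, v'⟩ h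
      rw [hφ] at h
      simp only at h
      have hab : σ.symm a = σ.symm b := congrArg Sigma.fst h
      have hab' : a = b := σ.symm.injective hab
      subst hab'
      have := eq_of_heq (Sigma.mk.inj_iff.mp h).2
      exact congrArg _ (hψinj a this)
    -- the box cells
    set T : (∀ jj, Fin (r jj)) → (∀ i, Fin (n i)) := fun w i =>
      Fin.cast (congrArg n (σ.symm_apply_apply i)) (ψ (σ i) (w (σ i))) with hT
    have hTval : ∀ w i, ((T w i : ℕ)) = ((ψ (σ i) (w (σ i)) : ℕ)) := by
      intro w i; rw [hT]; rfl
    have himage : ∀ w, (edgeOf r w).image φ = edgeOf n (T w) := by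
      intro w
      ext x
      constructor
      · intro hx
        obtain ⟨y, hy, rfl⟩ := Finset.mem_image.1 hx
        rw [mem_edgeOf] at hy
        rcases y with ⟨jj, v⟩
        simp only at hy
        subst hy
        rw [mem_edgeOf]
        apply Fin.ext
        rw [hTval]
        show ((ψ jj (w jj) : ℕ)) = ((ψ (σ (σ.symm jj)) (w (σ (σ.symm jj))) : ℕ))
        exact congrArg (fun jj' => ((ψ jj' (w jj') : ℕ))) (σ.apply_symm_apply jj).symm
      · intro hx
        rw [mem_edgeOf] at hx
        refine Finset.mem_image.2 ⟨⟨σ x.1, w (σ x.1)⟩, mem_edgeOf.2 rfl, ?_⟩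
        refine sigma_eq_of_val ?_ ?_
        · show σ.symm (σ x.1) = x.1
          exact σ.symm_apply_apply x.1
        · show ((ψ (σ x.1) (w (σ x.1)) : ℕ)) = (x.2 : ℕ)
          rw [congrArg Fin.val hx, hTval]
    -- the all-big transversal realizes U₀
    set wtop : ∀ jj, Fin (r jj) := fun jj => ⟨r jj - 1, by have := hr jj; omega⟩ with hwtop
    have hTtop : T wtop = U₀ := by
      funext i
      apply Fin.ext
      rw [hTval, hψval]
      have h1 := hr (σ i)
      rw [if_neg (by simp [hwtop]; omega)]
      exact congrArg (fun i' => ((U₀ i' : ℕ))) (σ.symm_apply_apply i)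
    -- coordinatewise domination
    have hle : ∀ w i, ((T w i : ℕ)) ≤ ((U₀ i : ℕ)) := by
      intro w i
      rw [hTval, hψval]
      have h1 := hUbig (σ i)
      have h2 : σ.symm (σ i) = i := σ.symm_apply_apply i
      have h3 : ((U₀ (σ.symm (σ i)) : ℕ)) = ((U₀ i : ℕ)) :=
        congrArg (fun i' => ((U₀ i' : ℕ))) h2
      by_cases hc : ((w (σ i) : ℕ)) + 2 ≤ r (σ i)
      · rw [if_pos hc]; rw [h3] at h1; omega
      · rw [if_neg hc]; omega
    have hlt : ∀ w, T w ≠ U₀ → wt n (T w) < wt n U₀ := by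
      intro w hw
      have hex : ∃ i, ((T w i : ℕ)) < ((U₀ i : ℕ)) := by
        by_contra hc
        push_neg at hc
        exact hw (funext fun i => Fin.ext (le_antisymm (hle w i) (hc i)))
      obtain ⟨i₀, hi₀⟩ := hex
      exact Finset.sum_lt_sum (fun i _ => hle w i) ⟨i₀, Finset.mem_univ i₀, hi₀⟩
    have hgetj : l.get j = edgeOf n U₀ := by
      rw [List.get_eq_getElem]
      exact getElem_map' (edgeOf n) cells (j : ℕ) hjc j.2
    refine ⟨φ, hφinj, ?_, ?_⟩
    · -- all images are present
      intro e heH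
      obtain ⟨w, rfl⟩ : ∃ w, e = edgeOf r w := by
        rw [hH, Finset.mem_filter] at heH
        exact exists_cell heH.2
      rw [himage w]
      by_cases hTU : T w = U₀
      · rw [hTU]
        refine Finset.mem_union.2 (Or.inr ?_)
        rw [← hgetj]
        show l.get j ∈ (l.take ((j : ℕ) + 1)).toFinset
        exact mem_take_toFinset l (j : ℕ) ((j : ℕ) + 1) j.2 (Nat.lt_succ_self _)
      · by_cases hTg : IsGood n r (T w)
        · -- appears earlier in the list
          have hmem : T w ∈ cells.toFinset := by
            rw [hctf, goodF, Finset.mem_filter]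
            exact ⟨Finset.mem_univ _, hTg⟩
          obtain ⟨kc, hkc⟩ := List.mem_iff_get.1 (List.mem_toFinset.1 hmem)
          have hkcg : cells[(kc : ℕ)]'kc.2 = T w := by
            rw [← List.get_eq_getElem]; exact hkc
          have hklt : (kc : ℕ) < (j : ℕ) := by
            by_contra hc
            push_neg at hc
            rcases Nat.lt_or_ge (j : ℕ) (kc : ℕ) with h | h
            · have h4 := hmono (j : ℕ) (kc : ℕ) hjc kc.2 h
              rw [hkcg] at h4
              have hjv : wt n (cells[(j : ℕ)]'hjc) = wt n U₀ := rfl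
              have h5 := hlt w hTU
              omega
            · have hkj : (kc : ℕ) = (j : ℕ) := by omega
              apply hTU
              have h6 : cells[(kc : ℕ)]'kc.2 = cells[(j : ℕ)]'hjc := by
                congr 1
              exact hkcg.symm.trans (h6.trans rfl)
          refine Finset.mem_union.2 (Or.inr ?_)
          have hlkc : (kc : ℕ) < l.length := by rw [hlen]; exact kc.2
          have h8 : edgeOf n (T w) = l[(kc : ℕ)]'hlkc := by
            rw [← hkcg]
            exact (getElem_map' (edgeOf n) cells (kc : ℕ) kc.2 hlkc).symm
          rw [h8]
          exact mem_take_toFinset l (kc : ℕ) ((j : ℕ) + 1) hlkc (by omega)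
        · -- a bad cell, present from the start
          refine Finset.mem_union.2 (Or.inl ?_)
          rw [hF]
          refine Finset.mem_image_of_mem _ ?_
          rw [badF, Finset.mem_filter]
          exact ⟨Finset.mem_univ _, hTg⟩
    · -- the new edge is an image
      refine Finset.mem_image.2 ⟨edgeOf r wtop, edgeOf_mem_host r wtop, ?_⟩
      rw [himage wtop, hTtop, hgetj]

lemma toNat1_injective : Function.Injective (fun (U : ∀ i, Fin (n i)) (i : Fin d) => (U i : ℕ) + 1) := by
  intro U U' h
  funext i
  apply Fin.ext
  have := congrFun h i
  simpa using this

lemma good_count (hr : ∀ i, 1 ≤ r i) :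
    {T : Fin d → ℕ | (∀ i, T i ∈ Finset.Icc 1 (n i)) ∧
        ∃ σ : Equiv.Perm (Fin d), ∀ i, T i ∈ Finset.Icc 1 (n i) \ Finset.Icc 1 (r (σ i) - 1)}.ncard
      = (goodF n r).card := by
  have hset : {T : Fin d → ℕ | (∀ i, T i ∈ Finset.Icc 1 (n i)) ∧
      ∃ σ : Equiv.Perm (Fin d), ∀ i, T i ∈ Finset.Icc 1 (n i) \ Finset.Icc 1 (r (σ i) - 1)}
      = ↑((goodF n r).image (fun U i => (U i : ℕ) + 1)) := by
    ext T
    simp only [Set.mem_setOf_eq, Finset.coe_image, Set.mem_image, Finset.mem_coe]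
    constructor
    · rintro ⟨hT1, σ, hT2⟩
      have hlt : ∀ i, T i - 1 < n i := by
        intro i
        have := Finset.mem_Icc.1 (hT1 i)
        omega
      refine ⟨fun i => ⟨T i - 1, hlt i⟩, ?_, ?_⟩
      · rw [goodF, Finset.mem_filter]
        refine ⟨Finset.mem_univ _, σ, fun i => ?_⟩
        have h2 := hT2 i
        rw [Finset.mem_sdiff, Finset.mem_Icc, Finset.mem_Icc] at h2
        have h1 := Finset.mem_Icc.1 (hT1 i)
        have h3 := hr (σ i)
        show r (σ i) ≤ (T i - 1) + 1
        omega
      · funext i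
        have h1 := Finset.mem_Icc.1 (hT1 i)
        show (T i - 1) + 1 = T i
        omega
    · rintro ⟨U, hU, rfl⟩
      rw [goodF, Finset.mem_filter] at hU
      obtain ⟨-, σ, hσ⟩ := hU
      simp only [Finset.mem_Icc, Finset.mem_sdiff, not_and, not_le]
      refine ⟨fun i => ⟨by omega, by have := (U i).isLt; omega⟩, σ, fun i => ?_⟩
      have h1 := hσ i
      have h2 := (U i).isLt
      have h3 := hr (σ i)
      exact ⟨⟨by omega, by omega⟩, by omega⟩
  rw [hset, Set.ncard_coe_finset, Finset.card_image_of_injective _ (toNat1_injective n)]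

lemma card_split : (goodF n r).card + (badF n r).card = ∏ i, n i := by
  have := Finset.card_filter_add_card_filter_not
    (s := (Finset.univ : Finset (∀ i, Fin (n i)))) (p := IsGood n r)
  rw [goodF, badF]
  rw [this, Finset.card_univ, Fintype.card_pi]
  exact Finset.prod_congr rfl fun i _ => Fintype.card_fin (n i)

end Main

end WsatMS

/-- Moshkovitz–Shapira: weak saturation of complete d-partite d-uniform hypergraphs.
The host `K^d_{n₁,…,n_d}` has vertex parts `Fin (n i)` and edges the transversals
(one vertex from each part); similarly the pattern `K^d_{r₁,…,r_d}`. -/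
theorem wsat_complete_multipartite (d : ℕ) (hd : 1 ≤ d) (n r : Fin d → ℕ)
    (hr : ∀ i, 1 ≤ r i) (hrn : ∀ i, r i ≤ n i) :
    sInf {k : ℕ | ∃ F : Finset (Finset ((i : Fin d) × Fin (n i))),
        WeaklySat
          (Finset.univ.filter fun W : Finset ((i : Fin d) × Fin (n i)) =>
            ∀ i : Fin d, (W.filter fun v => v.1 = i).card = 1)
          (Finset.univ.filter fun W : Finset ((i : Fin d) × Fin (r i)) =>
            ∀ i : Fin d, (W.filter fun v => v.1 = i).card = 1)
          F ∧ F.card = k}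
      = (∏ i : Fin d, n i) -
        Set.ncard {T : Fin d → ℕ | (∀ i, T i ∈ Icc 1 (n i)) ∧
          ∃ σ : Equiv.Perm (Fin d), ∀ i, T i ∈ Icc 1 (n i) \ Icc 1 (r (σ i) - 1)} := by
  classical
  have hmem : (WsatMS.badF n r).card ∈ {k : ℕ | ∃ F : Finset (Finset ((i : Fin d) × Fin (n i))),
      WeaklySat
        (Finset.univ.filter fun W : Finset ((i : Fin d) × Fin (n i)) =>
          ∀ i : Fin d, (W.filter fun v => v.1 = i).card = 1)
        (Finset.univ.filter fun W : Finset ((i : Fin d) × Fin (r i)) =>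
          ∀ i : Fin d, (W.filter fun v => v.1 = i).card = 1)
        F ∧ F.card = k} :=
    ⟨(WsatMS.badF n r).image (WsatMS.edgeOf n), WsatMS.upper_bound n r hr hrn,
      Finset.card_image_of_injective _ (WsatMS.edgeOf_injective n)⟩
  have hinf : sInf {k : ℕ | ∃ F : Finset (Finset ((i : Fin d) × Fin (n i))),
      WeaklySat
        (Finset.univ.filter fun W : Finset ((i : Fin d) × Fin (n i)) =>
          ∀ i : Fin d, (W.filter fun v => v.1 = i).card = 1)
        (Finset.univ.filter fun W : Finset ((i : Fin d) × Fin (r i)) =>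
          ∀ i : Fin d, (W.filter fun v => v.1 = i).card = 1)
        F ∧ F.card = k} = (WsatMS.badF n r).card := by
    refine le_antisymm (Nat.sInf_le hmem) (le_csInf ⟨_, hmem⟩ ?_)
    rintro k ⟨F, hws, rfl⟩
    exact WsatMS.lower_bound n r hr F hws
  rw [hinf, WsatMS.good_count n r hr]
  have := WsatMS.card_split n r
  omega
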